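/- Let λ ∈ ℂ with Im λ > 0, and let u : (0,∞) → ℂ be a smooth function satisfying the ODE −½(x² u''(x) + x u'(x)) − λ² u(x) + x² u(x) = 0. Assume: (i) u and x u' decay faster than any power of x as x → ∞ (e.g. |u(x)| + |x u'(x)| ≤ C_N x^{−N} for all N and x ≥ 1); and (ii) |u(x)| + |x u'(x)| ≤ C x^{Im λ} for 0 < x ≤ 1. Then u ≡ 0. -/

import Mathlib

open Set Filter Complex

lemma aux_zero_of_monotone (h h' : ℝ → ℝ)
    (hd : ∀ x ∈ Set.Ioi (0:ℝ), HasDerivAt h (h' x) x)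
    (hpos : ∀ x ∈ Set.Ioi (0:ℝ), 0 ≤ h' x)
    (h0 : Tendsto h (nhdsWithin 0 (Set.Ioi 0)) (nhds 0))
    (hinf : Tendsto h atTop (nhds 0)) :
    ∀ x ∈ Set.Ioi (0:ℝ), h' x = 0 := by
  have hmono : MonotoneOn h (Set.Ioi 0) := by
    apply monotoneOn_of_deriv_nonneg (convex_Ioi 0)
    · exact fun x hx => (hd x hx).continuousAt.continuousWithinAt
    · intro x hx
      rw [interior_Ioi] at hx
      exact (hd x hx).differentiableAt.differentiableWithinAt
    · intro x hx
      rw [interior_Ioi] at hx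
      rw [(hd x hx).deriv]
      exact hpos x hx
  have hzero : ∀ x ∈ Set.Ioi (0:ℝ), h x = 0 := by
    intro x hx
    have hle : h x ≤ 0 := by
      refine ge_of_tendsto hinf ?_
      filter_upwards [eventually_ge_atTop x] with y hy
      exact hmono hx (lt_of_lt_of_le hx hy) hy
    have hge : 0 ≤ h x := by
      refine le_of_tendsto h0 ?_
      filter_upwards [self_mem_nhdsWithin,
        eventually_nhdsWithin_of_eventually_nhds (eventually_lt_nhds hx)] with y hy hyx
      exact hmono hy hx hyx.le
    linarith
  intro x hx
  have heq : h =ᶠ[nhds x] (fun _ => 0) :=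
    Filter.eventuallyEq_of_mem (Ioi_mem_nhds hx) hzero
  have := heq.deriv_eq
  rw [(hd x hx).deriv] at this
  simp at this
  exact this


/-- Let `Im λ > 0` and let `u : (0,∞) → ℂ` be smooth with
`−½(x²u'' + xu') − λ²u + x²u = 0`.  If `u` and `xu'` decay faster than any power of `x`
as `x → ∞`, and `|u| + |xu'| ≤ C x^{Im λ}` for `0 < x ≤ 1`, then `u ≡ 0` on `(0,∞)`. -/
theorem reduced_normal_operator_uniqueness
    (l : ℂ) (hl : 0 < l.im) (u : ℝ → ℂ)
    (hreg : ContDiffOn ℝ (⊤ : ℕ∞) u (Set.Ioi 0))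
    (hode : ∀ x ∈ Set.Ioi (0 : ℝ),
      -(1 / 2 : ℂ) * ((x : ℂ) ^ 2 * deriv (deriv u) x + (x : ℂ) * deriv u x)
        - l ^ 2 * u x + (x : ℂ) ^ 2 * u x = 0)
    (hdecayInf : ∀ N : ℕ, ∃ C : ℝ, ∀ x : ℝ, 1 ≤ x →
      ‖u x‖ + ‖(x : ℂ) * deriv u x‖ ≤ C / x ^ N)
    (hdecayZero : ∃ C : ℝ, ∀ x : ℝ, 0 < x → x ≤ 1 →
      ‖u x‖ + ‖(x : ℂ) * deriv u x‖ ≤ C * x ^ l.im) :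
    ∀ x ∈ Set.Ioi (0 : ℝ), u x = 0 := by
  obtain ⟨C0, hC0⟩ := hdecayZero
  obtain ⟨C1, hC1⟩ := hdecayInf 1
  set a : ℝ := l.re with ha
  set b : ℝ := l.im with hb
  -- basic differentiability facts
  have hder : ContDiffOn ℝ (⊤:ℕ∞) (deriv u) (Set.Ioi 0) :=
    hreg.deriv_of_isOpen isOpen_Ioi (by exact_mod_cast le_top)
  have hu1 : ∀ x ∈ Set.Ioi (0:ℝ), HasDerivAt u (deriv u x) x := fun x hx =>
    ((hreg.contDiffAt (Ioi_mem_nhds hx)).differentiableAt (by simp)).hasDerivAt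
  have hu2 : ∀ x ∈ Set.Ioi (0:ℝ), HasDerivAt (deriv u) (deriv (deriv u) x) x := fun x hx =>
    ((hder.contDiffAt (Ioi_mem_nhds hx)).differentiableAt (by simp)).hasDerivAt
  -- the Wronskian-type function
  set F : ℝ → ℂ := fun x => star (u x) * ((x:ℂ) * deriv u x) with hFdef
  have hF : ∀ x ∈ Set.Ioi (0:ℝ), HasDerivAt F
      (star (deriv u x) * ((x:ℂ) * deriv u x)
        + star (u x) * (deriv u x + (x:ℂ) * deriv (deriv u) x)) x := by
    intro x hx
    have h2 : HasDerivAt (fun y : ℝ => (y:ℂ) * deriv u y)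
        ((1:ℂ) * deriv u x + (x:ℂ) * deriv (deriv u) x) x := by
      simpa [Pi.mul_def] using (Complex.ofRealCLM.hasDerivAt).mul (hu2 x hx)
    simpa [hFdef, Pi.mul_def] using (hu1 x hx).star.mul h2
  -- the value of the derivative, using the ODE
  have key : ∀ x ∈ Set.Ioi (0:ℝ),
      star (deriv u x) * ((x:ℂ) * deriv u x)
        + star (u x) * (deriv u x + (x:ℂ) * deriv (deriv u) x)
      = (x:ℂ) * (Complex.normSq (deriv u x) : ℂ)
        + (Complex.normSq (u x) : ℂ) * (2*((x:ℂ)^2 - l^2)/(x:ℂ)) := by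
    intro x hx
    have hx0 : (x:ℂ) ≠ 0 := by
      exact_mod_cast ne_of_gt (mem_Ioi.mp hx)
    have hode' := hode x hx
    have h2 : deriv u x + (x:ℂ) * deriv (deriv u) x
        = 2*((x:ℂ)^2 - l^2) * u x / (x:ℂ) := by
      rw [eq_div_iff hx0]
      linear_combination (-2 : ℂ) * hode'
    rw [h2]
    have m1 : star (u x) * u x = (Complex.normSq (u x) : ℂ) := by
      rw [Complex.star_def, mul_comm, Complex.mul_conj]
    have m2 : star (deriv u x) * deriv u x = (Complex.normSq (deriv u x) : ℂ) := by
      rw [Complex.star_def, mul_comm, Complex.mul_conj]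
    rw [div_eq_mul_inv, div_eq_mul_inv]
    linear_combination ((x:ℂ)) * m2 + (2*((x:ℂ)^2 - l^2) * ((x:ℂ))⁻¹) * m1
  -- imaginary and real parts of the derivative
  have him : ∀ x ∈ Set.Ioi (0:ℝ),
      ((x:ℂ) * (Complex.normSq (deriv u x) : ℂ)
        + (Complex.normSq (u x) : ℂ) * (2*((x:ℂ)^2 - l^2)/(x:ℂ))).im
      = Complex.normSq (u x) * (-(4*a*b)/x) := by
    intro x hx
    have hx0 : (x:ℝ) ≠ 0 := ne_of_gt (mem_Ioi.mp hx)
    simp only [Complex.add_im, Complex.mul_im, Complex.mul_re, Complex.div_im,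
      Complex.div_re, Complex.normSq_apply, Complex.add_re, Complex.sub_re,
      Complex.sub_im, Complex.ofReal_re, Complex.ofReal_im, pow_two,
      Complex.re_ofNat, Complex.im_ofNat]
    field_simp
    ring
  have hre : ∀ x ∈ Set.Ioi (0:ℝ),
      ((x:ℂ) * (Complex.normSq (deriv u x) : ℂ)
        + (Complex.normSq (u x) : ℂ) * (2*((x:ℂ)^2 - l^2)/(x:ℂ))).re
      = x * Complex.normSq (deriv u x)
        + Complex.normSq (u x) * (2*(x^2 - (a^2 - b^2))/x) := by
    intro x hx
    have hx0 : (x:ℝ) ≠ 0 := ne_of_gt (mem_Ioi.mp hx)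
    simp only [Complex.add_im, Complex.mul_im, Complex.mul_re, Complex.div_im,
      Complex.div_re, Complex.normSq_apply, Complex.add_re, Complex.sub_re,
      Complex.sub_im, Complex.ofReal_re, Complex.ofReal_im, pow_two,
      Complex.re_ofNat, Complex.im_ofNat]
    field_simp
    ring
  -- limits of F at both ends
  have hC0nn : 0 ≤ C0 := by
    have := hC0 1 one_pos le_rfl
    have h1 : (0:ℝ) ≤ ‖u 1‖ + ‖(1:ℂ) * deriv u 1‖ := by positivity
    simpa using le_trans h1 this
  have hC1nn : 0 ≤ C1 := by
    have := hC1 1 le_rfl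
    have h1 : (0:ℝ) ≤ ‖u 1‖ + ‖(1:ℂ) * deriv u 1‖ := by positivity
    simpa using le_trans h1 this
  have hFbound : ∀ x : ℝ, ‖F x‖ = ‖u x‖ * ‖(x:ℂ) * deriv u x‖ := by
    intro x
    rw [hFdef]
    simp [norm_mul]
  have hF0 : Tendsto F (nhdsWithin 0 (Set.Ioi 0)) (nhds 0) := by
    have hb2 : Tendsto (fun x : ℝ => C0 * x ^ b * (C0 * x ^ b))
        (nhdsWithin 0 (Set.Ioi 0)) (nhds 0) := by
      have hc : Tendsto (fun x : ℝ => x ^ b) (nhdsWithin 0 (Set.Ioi 0)) (nhds 0) := by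
        have := (Real.continuousAt_rpow_const 0 b (Or.inr hl.le)).tendsto
        rw [Real.zero_rpow (ne_of_gt hl)] at this
        exact this.mono_left nhdsWithin_le_nhds
      have := ((hc.const_mul C0).mul (hc.const_mul C0))
      simpa using this
    refine squeeze_zero_norm' ?_ hb2
    filter_upwards [self_mem_nhdsWithin,
      eventually_nhdsWithin_of_eventually_nhds (eventually_le_nhds (by norm_num : (0:ℝ) < 1))]
        with x hx hx1
    rw [hFbound]
    have hbd := hC0 x (mem_Ioi.mp hx) hx1
    have h1 : ‖u x‖ ≤ C0 * x ^ b := le_trans (le_add_of_nonneg_right (norm_nonneg _)) hbd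
    have h2 : ‖(x:ℂ) * deriv u x‖ ≤ C0 * x ^ b :=
      le_trans (le_add_of_nonneg_left (norm_nonneg _)) hbd
    exact mul_le_mul h1 h2 (norm_nonneg _)
      (mul_nonneg hC0nn (Real.rpow_nonneg (le_of_lt (mem_Ioi.mp hx)) b))
  have hFinf : Tendsto F atTop (nhds 0) := by
    have hb2 : Tendsto (fun x : ℝ => (C1 / x) * (C1 / x)) atTop (nhds 0) := by
      have hc : Tendsto (fun x : ℝ => C1 / x) atTop (nhds 0) :=
        Tendsto.div_atTop tendsto_const_nhds tendsto_id
      simpa using hc.mul hc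
    refine squeeze_zero_norm' ?_ hb2
    filter_upwards [eventually_ge_atTop (1:ℝ)] with x hx1
    rw [hFbound]
    have hbd := hC1 x hx1
    rw [pow_one] at hbd
    have h1 : ‖u x‖ ≤ C1 / x := le_trans (le_add_of_nonneg_right (norm_nonneg _)) hbd
    have h2 : ‖(x:ℂ) * deriv u x‖ ≤ C1 / x :=
      le_trans (le_add_of_nonneg_left (norm_nonneg _)) hbd
    exact mul_le_mul h1 h2 (norm_nonneg _) (by positivity)
  -- case split on Re l
  intro x hx
  rcases eq_or_ne a 0 with hA | hA
  · -- Re l = 0 : use the real part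
    set h : ℝ → ℝ := fun y => (F y).re with hhdef
    set h' : ℝ → ℝ := fun y =>
      y * Complex.normSq (deriv u y) + Complex.normSq (u y) * (2*(y^2 - (a^2 - b^2))/y)
      with hh'def
    have hd : ∀ y ∈ Set.Ioi (0:ℝ), HasDerivAt h (h' y) y := by
      intro y hy
      have := Complex.reCLM.hasFDerivAt.comp_hasDerivAt y (hF y hy)
      rw [key y hy] at this
      have heq := hre y hy
      simpa [hhdef, hh'def, heq, Function.comp_def] using this
    have hpos : ∀ y ∈ Set.Ioi (0:ℝ), 0 ≤ h' y := by
      intro y hy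
      have hy0 : (0:ℝ) < y := mem_Ioi.mp hy
      rw [hh'def, hA]
      have hn1 : 0 ≤ Complex.normSq (deriv u y) := Complex.normSq_nonneg _
      have hn2 : 0 ≤ Complex.normSq (u y) := Complex.normSq_nonneg _
      have hcoef : 0 ≤ 2*(y^2 - ((0:ℝ)^2 - b^2))/y :=
        le_of_lt (div_pos (by nlinarith) hy0)
      exact add_nonneg (mul_nonneg hy0.le hn1) (mul_nonneg hn2 hcoef)
    have h0 : Tendsto h (nhdsWithin 0 (Set.Ioi 0)) (nhds 0) := by
      have := (Complex.continuous_re.tendsto 0).comp hF0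
      simpa [hhdef, Function.comp_def] using this
    have hinf : Tendsto h atTop (nhds 0) := by
      have := (Complex.continuous_re.tendsto 0).comp hFinf
      simpa [hhdef, Function.comp_def] using this
    have hzero := aux_zero_of_monotone h h' hd hpos h0 hinf x hx
    rw [hh'def, hA] at hzero
    have hy0 : (0:ℝ) < x := mem_Ioi.mp hx
    have hcoef : 0 < 2*(x^2 - ((0:ℝ)^2 - b^2))/x := div_pos (by nlinarith) hy0
    have hn1 : 0 ≤ x * Complex.normSq (deriv u x) :=
      mul_nonneg hy0.le (Complex.normSq_nonneg _)
    have hn2 : 0 ≤ Complex.normSq (u x) := Complex.normSq_nonneg _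
    have : Complex.normSq (u x) * (2*(x^2 - ((0:ℝ)^2 - b^2))/x) = 0 := by nlinarith
    have hns : Complex.normSq (u x) = 0 := by
      rcases mul_eq_zero.mp this with h | h
      · exact h
      · exact absurd h (ne_of_gt hcoef)
    exact Complex.normSq_eq_zero.mp hns
  · -- Re l ≠ 0 : use (-a) times the imaginary part
    set h : ℝ → ℝ := fun y => -a * (F y).im with hhdef
    set h' : ℝ → ℝ := fun y => Complex.normSq (u y) * (4*a^2*b/y) with hh'def
    have hd : ∀ y ∈ Set.Ioi (0:ℝ), HasDerivAt h (h' y) y := by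
      intro y hy
      have hy0 : (y:ℝ) ≠ 0 := ne_of_gt (mem_Ioi.mp hy)
      have := (Complex.imCLM.hasFDerivAt.comp_hasDerivAt y (hF y hy)).const_mul (-a)
      rw [key y hy] at this
      have heq := him y hy
      have h3 : HasDerivAt h (-a * (Complex.normSq (u y) * (-(4*a*b)/y))) y := by
        simpa [hhdef, heq] using this
      convert h3 using 1
      rw [hh'def]
      field_simp
    have hpos : ∀ y ∈ Set.Ioi (0:ℝ), 0 ≤ h' y := by
      intro y hy
      have hy0 : (0:ℝ) < y := mem_Ioi.mp hy
      rw [hh'def]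
      have hn2 : 0 ≤ Complex.normSq (u y) := Complex.normSq_nonneg _
      have hcf : 0 ≤ 4*a^2*b/y :=
        div_nonneg (by nlinarith [sq_nonneg a, hl.le]) hy0.le
      exact mul_nonneg hn2 hcf
    have h0 : Tendsto h (nhdsWithin 0 (Set.Ioi 0)) (nhds 0) := by
      have := ((Complex.continuous_im.tendsto 0).comp hF0).const_mul (-a)
      simpa [hhdef, Function.comp] using this
    have hinf : Tendsto h atTop (nhds 0) := by
      have := ((Complex.continuous_im.tendsto 0).comp hFinf).const_mul (-a)
      simpa [hhdef, Function.comp] using this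
    have hzero := aux_zero_of_monotone h h' hd hpos h0 hinf x hx
    rw [hh'def] at hzero
    have hy0 : (0:ℝ) < x := mem_Ioi.mp hx
    have ha2 : 0 < a^2 := lt_of_le_of_ne (sq_nonneg a) (Ne.symm (pow_ne_zero 2 hA))
    have hcoef : 0 < 4*a^2*b/x := div_pos (by nlinarith) hy0
    have hns : Complex.normSq (u x) = 0 := by
      rcases mul_eq_zero.mp hzero with h | h
      · exact h
      · exact absurd h (ne_of_gt hcoef)
    exact Complex.normSq_eq_zero.mp hns
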